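/- δ' m n equals the minimum of the total cost 𝔎(I, γ) taken over all index sets I ⊆ {1, …, m} (determining a realization e' of e) and all alignments γ of e' and f, and this minimum is attained by some pair (I, γ). In particular, no realization of e admits an alignment with f of total cost strictly smaller than δ' m n. -/

import Mathlib

open scoped ENNReal

namespace Stmt1

variable {E F : Type*}

/-- The log projection of a list of moves: first components that are not `none`. -/
def logProj (γ : List (Option E × Option F)) : List E := γ.filterMap Prod.fst

/-- The model projection of a list of moves: second components that are not `none`. -/
def modelProj (γ : List (Option E × Option F)) : List F := γ.filterMap Prod.snd

/-- `γ` is an alignment of `e` and `f`: a list of moves (no `(none, none)` pairs)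
whose log projection is `e` and whose model projection is `f`. -/
def IsAlignment (e : List E) (f : List F) (γ : List (Option E × Option F)) : Prop :=
  (∀ mv ∈ γ, mv ≠ (none, none)) ∧ logProj γ = e ∧ modelProj γ = f

/-- Combined cost of a log move: `θ a` if `P_L a = 0`, else `P_L a * (1 + θ a)`. -/
noncomputable def lg (PL θ : E → ℝ≥0∞) (a : E) : ℝ≥0∞ :=
  if PL a = 0 then θ a else PL a * (1 + θ a)

/-- Combined cost of a synchronous move: `θ a` if `P₌ a b = 0`, else `P₌ a b * (1 + θ a)`. -/
noncomputable def sync (Peq : E → F → ℝ≥0∞) (θ : E → ℝ≥0∞) (a : E) (b : F) : ℝ≥0∞ :=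
  if Peq a b = 0 then θ a else Peq a b * (1 + θ a)

/-- Combined cost of a single move. -/
noncomputable def cMoveCost (PL : E → ℝ≥0∞) (PM : F → ℝ≥0∞) (Peq : E → F → ℝ≥0∞)
    (θ : E → ℝ≥0∞) : Option E × Option F → ℝ≥0∞
  | (some a, none) => lg PL θ a
  | (none, some b) => PM b
  | (some a, some b) => sync Peq θ a b
  | (none, none) => 0

/-- The realization of `e` determined by the index set `I`: the order-preserving
selection of the entries of `e` at the indices in `I`. -/
def select (e : List E) (I : Finset (Fin e.length)) : List E :=
  ((List.finRange e.length).filter (fun i => i ∈ I)).map e.get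

/-- Total cost `𝔎(I, γ)`: sum of the combined move costs of the moves of `γ` plus the
removal cost of the realization, i.e. the sum of `κ_u e_i` over non-selected indices. -/
noncomputable def totalCost (PL : E → ℝ≥0∞) (PM : F → ℝ≥0∞) (Peq : E → F → ℝ≥0∞)
    (θ κu : E → ℝ≥0∞) (e : List E) (I : Finset (Fin e.length))
    (γ : List (Option E × Option F)) : ℝ≥0∞ :=
  (γ.map (cMoveCost PL PM Peq θ)).sum + ∑ i ∈ Iᶜ, κu (e.get i)

/-! ### Auxiliary development -/

inductive Step (E F : Type*) where
  | syn : E → F → Step E F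
  | lgS : E → Step E F
  | drp : E → Step E F
  | mdl : F → Step E F

def projE : Step E F → Option E
  | .syn a _ => some a
  | .lgS a => some a
  | .drp a => some a
  | .mdl _ => none

def projF : Step E F → Option F
  | .syn _ b => some b
  | .mdl b => some b
  | .lgS _ => none
  | .drp _ => none

variable (PL : E → ℝ≥0∞) (PM : F → ℝ≥0∞) (Peq : E → F → ℝ≥0∞) (θ κu : E → ℝ≥0∞)

noncomputable def stepCost : Step E F → ℝ≥0∞
  | .syn a b => sync Peq θ a b
  | .lgS a => lg PL θ a
  | .drp a => κu a
  | .mdl b => PM b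

def Valid (x : List E) (y : List F) (p : List (Step E F)) : Prop :=
  p.filterMap projE = x ∧ p.filterMap projF = y

noncomputable def pcost (p : List (Step E F)) : ℝ≥0∞ :=
  (p.map (stepCost PL PM Peq θ κu)).sum

noncomputable def opt : List E → List F → ℝ≥0∞
  | [], [] => 0
  | a :: x, [] => min (lg PL θ a) (κu a) + opt x []
  | [], b :: y => PM b + opt [] y
  | a :: x, b :: y =>
      min (sync Peq θ a b + opt x y)
        (min (lg PL θ a + opt x (b :: y))
          (min (κu a + opt x (b :: y)) (PM b + opt (a :: x) y)))
  termination_by x y => x.length + y.length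

lemma opt_le_mdl (x : List E) (b : F) (y : List F) :
    opt PL PM Peq θ κu x (b :: y) ≤ PM b + opt PL PM Peq θ κu x y := by
  cases x with
  | nil => simp [opt]
  | cons a x =>
    rw [show opt PL PM Peq θ κu (a :: x) (b :: y) = _ from by rw [opt]]
    exact (min_le_right _ _).trans ((min_le_right _ _).trans (min_le_right _ _))

lemma opt_le_lg (a : E) (x : List E) (y : List F) :
    opt PL PM Peq θ κu (a :: x) y ≤ lg PL θ a + opt PL PM Peq θ κu x y := by
  cases y with
  | nil =>
    rw [show opt PL PM Peq θ κu (a :: x) [] = _ from by rw [opt]]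
    exact add_le_add_left (min_le_left _ _) _
  | cons b y =>
    rw [show opt PL PM Peq θ κu (a :: x) (b :: y) = _ from by rw [opt]]
    exact (min_le_right _ _).trans (min_le_left _ _)

lemma opt_le_drp (a : E) (x : List E) (y : List F) :
    opt PL PM Peq θ κu (a :: x) y ≤ κu a + opt PL PM Peq θ κu x y := by
  cases y with
  | nil =>
    rw [show opt PL PM Peq θ κu (a :: x) [] = _ from by rw [opt]]
    exact add_le_add_left (min_le_right _ _) _
  | cons b y =>
    rw [show opt PL PM Peq θ κu (a :: x) (b :: y) = _ from by rw [opt]]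
    exact (min_le_right _ _).trans ((min_le_right _ _).trans (min_le_left _ _))

lemma opt_le_syn (a : E) (b : F) (x : List E) (y : List F) :
    opt PL PM Peq θ κu (a :: x) (b :: y) ≤ sync Peq θ a b + opt PL PM Peq θ κu x y := by
  rw [show opt PL PM Peq θ κu (a :: x) (b :: y) = _ from by rw [opt]]
  exact min_le_left _ _

lemma opt_exists (x : List E) (y : List F) :
    ∃ p, Valid x y p ∧ pcost PL PM Peq θ κu p = opt PL PM Peq θ κu x y := by
  induction x generalizing y with
  | nil =>
    induction y with
    | nil => exact ⟨[], ⟨rfl, rfl⟩, by simp [pcost, opt]⟩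
    | cons b y ihy =>
      obtain ⟨p, ⟨hE, hF⟩, hc⟩ := ihy
      refine ⟨.mdl b :: p, ⟨by simpa [projE] using hE, by simpa [projF] using hF⟩, ?_⟩
      rw [show opt PL PM Peq θ κu [] (b :: y) = _ from by rw [opt]]
      simp [pcost, stepCost] at hc ⊢
      rw [hc]
  | cons a x ihx =>
    induction y with
    | nil =>
      obtain ⟨p, ⟨hE, hF⟩, hc⟩ := ihx []
      rw [show opt PL PM Peq θ κu (a :: x) [] = _ from by rw [opt]]
      rcases min_cases (lg PL θ a) (κu a) with ⟨hmin, -⟩ | ⟨hmin, -⟩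
      · refine ⟨.lgS a :: p, ⟨by simpa [projE] using hE, by simpa [projF] using hF⟩, ?_⟩
        simp [pcost, stepCost] at hc ⊢
        rw [hc, hmin]
      · refine ⟨.drp a :: p, ⟨by simpa [projE] using hE, by simpa [projF] using hF⟩, ?_⟩
        simp [pcost, stepCost] at hc ⊢
        rw [hc, hmin]
    | cons b y ihy =>
      rw [show opt PL PM Peq θ κu (a :: x) (b :: y) = _ from by rw [opt]]
      rcases min_cases (sync Peq θ a b + opt PL PM Peq θ κu x y)
        (min (lg PL θ a + opt PL PM Peq θ κu x (b :: y))
          (min (κu a + opt PL PM Peq θ κu x (b :: y))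
            (PM b + opt PL PM Peq θ κu (a :: x) y))) with ⟨hmin, -⟩ | ⟨hmin, -⟩
      · obtain ⟨p, ⟨hE, hF⟩, hc⟩ := ihx y
        refine ⟨.syn a b :: p, ⟨by simpa [projE] using hE, by simpa [projF] using hF⟩, ?_⟩
        simp [pcost, stepCost] at hc ⊢
        rw [hc, hmin]
      · rw [hmin]
        rcases min_cases (lg PL θ a + opt PL PM Peq θ κu x (b :: y))
          (min (κu a + opt PL PM Peq θ κu x (b :: y))
            (PM b + opt PL PM Peq θ κu (a :: x) y)) with ⟨hmin2, -⟩ | ⟨hmin2, -⟩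
        · obtain ⟨p, ⟨hE, hF⟩, hc⟩ := ihx (b :: y)
          refine ⟨.lgS a :: p, ⟨by simpa [projE] using hE, by rw [List.filterMap_cons_none rfl]; exact hF⟩, ?_⟩
          simp [pcost, stepCost] at hc ⊢
          rw [hc, hmin2]
        · rw [hmin2]
          rcases min_cases (κu a + opt PL PM Peq θ κu x (b :: y))
            (PM b + opt PL PM Peq θ κu (a :: x) y) with ⟨hmin3, -⟩ | ⟨hmin3, -⟩
          · obtain ⟨p, ⟨hE, hF⟩, hc⟩ := ihx (b :: y)
            refine ⟨.drp a :: p, ⟨by simpa [projE] using hE, by rw [List.filterMap_cons_none rfl]; exact hF⟩, ?_⟩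
            simp [pcost, stepCost] at hc ⊢
            rw [hc, hmin3]
          · obtain ⟨p, ⟨hE, hF⟩, hc⟩ := ihy
            refine ⟨.mdl b :: p, ⟨by rw [List.filterMap_cons_none rfl]; exact hE, by simpa [projF] using hF⟩, ?_⟩
            simp [pcost, stepCost] at hc ⊢
            rw [hc, hmin3]

lemma opt_le (p : List (Step E F)) (x : List E) (y : List F) (h : Valid x y p) :
    opt PL PM Peq θ κu x y ≤ pcost PL PM Peq θ κu p := by
  induction p generalizing x y with
  | nil =>
    obtain ⟨hE, hF⟩ := h
    simp [List.filterMap] at hE hF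
    subst hE; subst hF
    simp [pcost, opt]
  | cons s p ih =>
    obtain ⟨hE, hF⟩ := h
    cases s with
    | syn a b =>
      simp [projE, projF] at hE hF
      subst hE; subst hF
      calc opt PL PM Peq θ κu _ _ ≤ sync Peq θ a b + opt PL PM Peq θ κu _ _ :=
            opt_le_syn PL PM Peq θ κu a b _ _
        _ ≤ sync Peq θ a b + pcost PL PM Peq θ κu p :=
            add_le_add_right (ih _ _ ⟨rfl, rfl⟩) _
        _ = _ := by simp [pcost, stepCost]
    | lgS a =>
      simp [projE, projF] at hE hF
      subst hE; subst hF
      calc opt PL PM Peq θ κu _ _ ≤ lg PL θ a + opt PL PM Peq θ κu _ _ := opt_le_lg PL PM Peq θ κu a _ _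
        _ ≤ lg PL θ a + pcost PL PM Peq θ κu p := add_le_add_right (ih _ _ ⟨rfl, rfl⟩) _
        _ = _ := by simp [pcost, stepCost]
    | drp a =>
      simp [projE, projF] at hE hF
      subst hE; subst hF
      calc opt PL PM Peq θ κu _ _ ≤ κu a + opt PL PM Peq θ κu _ _ := opt_le_drp PL PM Peq θ κu a _ _
        _ ≤ κu a + pcost PL PM Peq θ κu p := add_le_add_right (ih _ _ ⟨rfl, rfl⟩) _
        _ = _ := by simp [pcost, stepCost]
    | mdl b =>
      simp [projE, projF] at hE hF
      subst hE; subst hF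
      calc opt PL PM Peq θ κu _ _ ≤ PM b + opt PL PM Peq θ κu _ _ := opt_le_mdl PL PM Peq θ κu _ b _
        _ ≤ PM b + pcost PL PM Peq θ κu p := add_le_add_right (ih _ _ ⟨rfl, rfl⟩) _
        _ = _ := by simp [pcost, stepCost]


def selOf (c : List (E × Bool)) : List E := (c.filter (fun z => z.2)).map Prod.fst

noncomputable def dropSum (c : List (E × Bool)) : ℝ≥0∞ :=
  ((c.filter (fun z => !z.2)).map (fun z => κu z.1)).sum

noncomputable def mcost (γ : List (Option E × Option F)) : ℝ≥0∞ :=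
  (γ.map (cMoveCost PL PM Peq θ)).sum

lemma plan_to_tagged (p : List (Step E F)) (x : List E) (y : List F) (h : Valid x y p) :
    ∃ (c : List (E × Bool)) (γ : List (Option E × Option F)),
      c.map Prod.fst = x ∧ IsAlignment (selOf c) y γ ∧
        mcost PL PM Peq θ γ + dropSum κu c = pcost PL PM Peq θ κu p := by
  induction p generalizing x y with
  | nil =>
    obtain ⟨hE, hF⟩ := h
    simp at hE hF
    subst hE; subst hF
    exact ⟨[], [], rfl, ⟨by simp, rfl, rfl⟩, by simp [mcost, dropSum, pcost]⟩
  | cons s p ih =>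
    obtain ⟨hE, hF⟩ := h
    cases s with
    | syn a b =>
      simp [projE, projF] at hE hF
      subst hE; subst hF
      obtain ⟨c, γ, hmap, ⟨hno, hl, hm⟩, hc⟩ := ih _ _ ⟨rfl, rfl⟩
      refine ⟨(a, true) :: c, (some a, some b) :: γ, by simp [hmap], ⟨?_, ?_, ?_⟩, ?_⟩
      · intro mv hmv
        rcases List.mem_cons.mp hmv with h | h
        · simp [h]
        · exact hno mv h
      · simp [selOf, logProj] at hl ⊢; exact hl
      · simp [modelProj] at hm ⊢; exact hm
      · simp [mcost, dropSum, cMoveCost, pcost, stepCost] at hc ⊢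
        rw [add_assoc, hc]
    | lgS a =>
      simp [projE, projF] at hE hF
      subst hE; subst hF
      obtain ⟨c, γ, hmap, ⟨hno, hl, hm⟩, hc⟩ := ih _ _ ⟨rfl, rfl⟩
      refine ⟨(a, true) :: c, (some a, none) :: γ, by simp [hmap], ⟨?_, ?_, ?_⟩, ?_⟩
      · intro mv hmv
        rcases List.mem_cons.mp hmv with h | h
        · simp [h]
        · exact hno mv h
      · simp [selOf, logProj] at hl ⊢; exact hl
      · simp [modelProj] at hm ⊢; exact hm
      · simp [mcost, dropSum, cMoveCost, pcost, stepCost] at hc ⊢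
        rw [add_assoc, hc]
    | drp a =>
      simp [projE, projF] at hE hF
      subst hE; subst hF
      obtain ⟨c, γ, hmap, ⟨hno, hl, hm⟩, hc⟩ := ih _ _ ⟨rfl, rfl⟩
      refine ⟨(a, false) :: c, γ, by simp [hmap], ⟨hno, ?_, hm⟩, ?_⟩
      · simp [selOf] at hl ⊢; exact hl
      · simp [mcost, dropSum, pcost, stepCost] at hc ⊢
        rw [← hc]; ring
    | mdl b =>
      simp [projE, projF] at hE hF
      subst hE; subst hF
      obtain ⟨c, γ, hmap, ⟨hno, hl, hm⟩, hc⟩ := ih _ _ ⟨rfl, rfl⟩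
      refine ⟨c, (none, some b) :: γ, hmap, ⟨?_, ?_, ?_⟩, ?_⟩
      · intro mv hmv
        rcases List.mem_cons.mp hmv with h | h
        · simp [h]
        · exact hno mv h
      · simp [logProj] at hl ⊢; exact hl
      · simp [modelProj] at hm ⊢; exact hm
      · simp [mcost, dropSum, cMoveCost, pcost, stepCost] at hc ⊢
        rw [add_assoc, hc]

lemma tagged_to_plan (c : List (E × Bool)) (y : List F) (γ : List (Option E × Option F))
    (h : IsAlignment (selOf c) y γ) :
    ∃ p, Valid (c.map Prod.fst) y p ∧
      pcost PL PM Peq θ κu p = mcost PL PM Peq θ γ + dropSum κu c := by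
  induction c generalizing y γ with
  | nil =>
    induction γ generalizing y with
    | nil =>
      obtain ⟨-, -, hm⟩ := h
      simp [modelProj] at hm
      subst hm
      exact ⟨[], ⟨rfl, rfl⟩, by simp [pcost, mcost, dropSum]⟩
    | cons mv γ ihγ =>
      obtain ⟨hno, hl, hm⟩ := h
      obtain ⟨o1, o2⟩ := mv
      cases o1 with
      | some a => simp [selOf, logProj] at hl
      | none =>
        cases o2 with
        | none => exact absurd rfl (hno (none, none) (by simp))
        | some b =>
          simp [modelProj] at hm
          obtain ⟨p, ⟨hE, hF⟩, hc⟩ :=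
            ihγ (modelProj γ) ⟨fun mv h' => hno mv (by simp [h']), hl, rfl⟩
          refine ⟨.mdl b :: p, ⟨by simpa [projE] using hE, ?_⟩, ?_⟩
          · rw [← hm]; simp [projF, hF, modelProj]
          · simp [pcost, stepCost, mcost, cMoveCost, dropSum] at hc ⊢
            rw [hc]
  | cons z c ihc =>
    obtain ⟨a, bl⟩ := z
    cases bl with
    | false =>
      obtain ⟨hno, hl, hm⟩ := h
      obtain ⟨p, ⟨hE, hF⟩, hc⟩ := ihc y γ ⟨hno, by simpa [selOf] using hl, hm⟩
      refine ⟨.drp a :: p, ⟨by simpa [projE] using hE, by rw [List.filterMap_cons_none rfl]; exact hF⟩, ?_⟩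
      simp [pcost, stepCost, dropSum] at hc ⊢
      rw [hc, ← add_assoc, add_comm (κu a) (mcost PL PM Peq θ γ), add_assoc]
    | true =>
      induction γ generalizing y with
      | nil =>
        obtain ⟨-, hl, -⟩ := h
        simp [selOf, logProj] at hl
      | cons mv γ ihγ =>
        obtain ⟨hno, hl, hm⟩ := h
        obtain ⟨o1, o2⟩ := mv
        cases o1 with
        | none =>
          cases o2 with
          | none => exact absurd rfl (hno (none, none) (by simp))
          | some b =>
            simp [modelProj] at hm
            obtain ⟨p, ⟨hE, hF⟩, hc⟩ :=
              ihγ (modelProj γ) ⟨fun mv h' => hno mv (by simp [h']), hl, rfl⟩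
            refine ⟨.mdl b :: p, ⟨by rw [List.filterMap_cons_none rfl]; exact hE, ?_⟩, ?_⟩
            · rw [← hm]; simp [projF, hF, modelProj]
            · simp [pcost, stepCost, mcost, cMoveCost, dropSum] at hc ⊢
              rw [hc]; ring
        | some a' =>
          have hl' : a' = a ∧ logProj γ = selOf c := by
            cases o2 <;> simpa [selOf, logProj] using hl
          obtain ⟨rfl, hl2⟩ := hl'
          cases o2 with
          | none =>
            obtain ⟨p, ⟨hE, hF⟩, hc⟩ :=
              ihc y γ ⟨fun mv h' => hno mv (by simp [h']), hl2, by simpa [modelProj] using hm⟩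
            refine ⟨.lgS a' :: p, ⟨by simpa [projE] using hE, by rw [List.filterMap_cons_none rfl]; exact hF⟩, ?_⟩
            simp [pcost, stepCost, mcost, cMoveCost, dropSum] at hc ⊢
            rw [hc]; ring
          | some b =>
            simp [modelProj] at hm
            obtain ⟨p, ⟨hE, hF⟩, hc⟩ :=
              ihc (modelProj γ) γ ⟨fun mv h' => hno mv (by simp [h']), hl2, rfl⟩
            refine ⟨.syn a' b :: p, ⟨by simpa [projE] using hE, ?_⟩, ?_⟩
            · rw [← hm]; simp [projF, hF, modelProj]
            · simp [pcost, stepCost, mcost, cMoveCost, dropSum] at hc ⊢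
              rw [hc]; ring


lemma canon_map_fst (e : List E) (bsel : Fin e.length → Bool) :
    ((List.finRange e.length).map (fun i => (e.get i, bsel i))).map Prod.fst = e := by
  rw [List.map_map]
  exact List.map_get_finRange e

lemma canon_selOf (e : List E) (bsel : Fin e.length → Bool) :
    selOf ((List.finRange e.length).map (fun i => (e.get i, bsel i))) =
      select e (Finset.univ.filter (fun i => bsel i)) := by
  unfold selOf select
  rw [List.filter_map, List.map_map]
  show List.map e.get _ = _
  congr 1
  apply List.filter_congr
  intro i _
  simp [Function.comp]

lemma canon_dropSum (e : List E) (bsel : Fin e.length → Bool) :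
    dropSum κu ((List.finRange e.length).map (fun i => (e.get i, bsel i))) =
      ∑ i ∈ (Finset.univ.filter (fun i => bsel i))ᶜ, κu (e.get i) := by
  unfold dropSum
  rw [List.filter_map, List.map_map]
  have hpred : ((fun z : E × Bool => !z.2) ∘ fun i => (e.get i, bsel i)) =
      fun i => !bsel i := rfl
  rw [hpred]
  have hnd : ((List.finRange e.length).filter (fun i => !bsel i)).Nodup :=
    (List.nodup_finRange _).filter _
  rw [show ((fun z : E × Bool => κu z.1) ∘ fun i => (e.get i, bsel i)) =
      fun i => κu (e.get i) from rfl]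
  rw [← List.sum_toFinset _ hnd]
  have hset : ((List.finRange e.length).filter (fun i => !bsel i)).toFinset =
      (Finset.univ.filter (fun i => bsel i))ᶜ := by
    ext i
    simp [List.mem_filter]
  rw [hset]

lemma exists_bsel (e : List E) (c : List (E × Bool)) (hc : c.map Prod.fst = e) :
    ∃ bsel : Fin e.length → Bool,
      c = (List.finRange e.length).map (fun i => (e.get i, bsel i)) := by
  subst hc
  refine ⟨fun i => (c.get (Fin.cast (by simp) i)).2, ?_⟩
  apply List.ext_getElem
  · simp
  · intro k h1 h2
    simp


lemma take_succ_rev {α : Type*} (l : List α) (i : ℕ) (hi : i < l.length) :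
    (l.take (i + 1)).reverse = l[i] :: (l.take i).reverse := by
  rw [List.take_succ]
  simp [List.getElem?_eq_getElem hi]

/-- `δ' m n` (defined by the recurrence) equals the minimum of the total cost `𝔎(I, γ)`
over all index sets `I` (determining a realization of `e`) and all alignments `γ` of the
realization with `f`; the minimum is attained by some pair `(I, γ)`, and no realization of
`e` admits an alignment with `f` of total cost strictly smaller than `δ' m n`. -/
theorem delta'_min_total_cost
    (PL : E → ℝ≥0∞) (PM : F → ℝ≥0∞) (Peq : E → F → ℝ≥0∞) (θ κu : E → ℝ≥0∞)
    (e : List E) (f : List F)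
    (δ' : ℕ → ℕ → ℝ≥0∞)
    (h00 : δ' 0 0 = 0)
    (hi0 : ∀ i (hi : i < e.length),
      δ' (i + 1) 0 = min (lg PL θ (e[i]'hi)) (κu (e[i]'hi)) + δ' i 0)
    (h0j : ∀ j (hj : j < f.length), δ' 0 (j + 1) = PM (f[j]'hj) + δ' 0 j)
    (hij : ∀ i j (hi : i < e.length) (hj : j < f.length),
      δ' (i + 1) (j + 1) =
        min (sync Peq θ (e[i]'hi) (f[j]'hj) + δ' i j)
          (min (lg PL θ (e[i]'hi) + δ' i (j + 1))
            (min (κu (e[i]'hi) + δ' i (j + 1)) (PM (f[j]'hj) + δ' (i + 1) j)))) :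
    (∃ (I : Finset (Fin e.length)) (γ : List (Option E × Option F)),
      IsAlignment (select e I) f γ ∧
        totalCost PL PM Peq θ κu e I γ = δ' e.length f.length) ∧
    (∀ (I : Finset (Fin e.length)) (γ : List (Option E × Option F)),
      IsAlignment (select e I) f γ →
        δ' e.length f.length ≤ totalCost PL PM Peq θ κu e I γ) := by
  have key : ∀ i, i ≤ e.length → ∀ j, j ≤ f.length →
      δ' i j = opt PL PM Peq θ κu ((e.take i).reverse) ((f.take j).reverse) := by
    intro i
    induction i with
    | zero =>
      intro _ j
      induction j with
      | zero => intro _; simp [opt, h00]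
      | succ j ihj =>
        intro hj
        have hj' : j < f.length := hj
        rw [h0j j hj', ihj hj'.le, take_succ_rev f j hj']
        simp [opt]
    | succ i ihi =>
      intro hi j
      have hi' : i < e.length := hi
      induction j with
      | zero =>
        intro _
        rw [hi0 i hi', ihi hi'.le 0 (Nat.zero_le _), take_succ_rev e i hi']
        simp [opt]
      | succ j ihj =>
        intro hj
        have hj' : j < f.length := hj
        rw [hij i j hi' hj', ihi hi'.le (j + 1) hj', ihi hi'.le j hj'.le, ihj hj'.le,
          take_succ_rev e i hi', take_succ_rev f j hj']
        rw [show opt PL PM Peq θ κu ((e[i]'hi') :: (e.take i).reverse)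
            ((f[j]'hj') :: (f.take j).reverse) = _ from by rw [opt]]
  have hδ : δ' e.length f.length = opt PL PM Peq θ κu e.reverse f.reverse := by
    simpa [List.take_length] using key e.length le_rfl f.length le_rfl
  constructor
  · obtain ⟨p, ⟨hE, hF⟩, hc⟩ := opt_exists PL PM Peq θ κu e.reverse f.reverse
    have hvE : p.reverse.filterMap projE = e := by
      rw [List.filterMap_reverse, hE, List.reverse_reverse]
    have hvF : p.reverse.filterMap projF = f := by
      rw [List.filterMap_reverse, hF, List.reverse_reverse]
    have hcr : pcost PL PM Peq θ κu p.reverse = opt PL PM Peq θ κu e.reverse f.reverse := by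
      rw [← hc]; simp [pcost, List.map_reverse, List.sum_reverse]
    obtain ⟨c, γ, hmap, halign, hcost⟩ :=
      plan_to_tagged PL PM Peq θ κu p.reverse e f ⟨hvE, hvF⟩
    obtain ⟨bsel, rfl⟩ := exists_bsel e c hmap
    refine ⟨Finset.univ.filter (fun i => bsel i), γ, ?_, ?_⟩
    · rwa [← canon_selOf]
    · unfold totalCost
      rw [← canon_dropSum κu e bsel,
        show (γ.map (cMoveCost PL PM Peq θ)).sum = mcost PL PM Peq θ γ from rfl,
        hcost, hcr, hδ]
  · intro I γ hal
    set bsel : Fin e.length → Bool := fun i => decide (i ∈ I) with hb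
    have hI : Finset.univ.filter (fun i => bsel i) = I := by
      ext i; simp [hb]
    have hsel : selOf ((List.finRange e.length).map (fun i => (e.get i, bsel i)))
        = select e I := by rw [canon_selOf, hI]
    obtain ⟨p, ⟨hE, hF⟩, hc⟩ :=
      tagged_to_plan PL PM Peq θ κu _ f γ (by rw [hsel]; exact hal)
    have hE' : p.filterMap projE = e := by rw [hE, canon_map_fst]
    have hrev : Valid e.reverse f.reverse p.reverse :=
      ⟨by rw [List.filterMap_reverse, hE'], by rw [List.filterMap_reverse, hF]⟩
    have hle := opt_le PL PM Peq θ κu p.reverse e.reverse f.reverse hrev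
    rw [hδ]
    refine hle.trans (le_of_eq ?_)
    have hpc : pcost PL PM Peq θ κu p.reverse = pcost PL PM Peq θ κu p := by
      simp [pcost, List.map_reverse, List.sum_reverse]
    rw [hpc, hc]
    unfold totalCost
    rw [show (γ.map (cMoveCost PL PM Peq θ)).sum = mcost PL PM Peq θ γ from rfl,
      canon_dropSum, hI]


end Stmt1
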